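/- Let R ⊆ ℝ₊ × ℝ be a barrier, i.e., a closed set such that (s,x) ∈ R and s < t implies (t,x) ∈ R. For a continuous path ω: ℝ₊ → ℝ with ω(0) = 0 and real numbers x < x', let τ(x) be the first hitting time of R by the space-time path t ↦ (t, x + ω(t)) and τ(x') that for x' + ω. If both hitting times are finite, then x + ω(τ(x)) ≤ x' + ω(τ(x')). -/

import Mathlib

open Set

/-- barrier monotonicity. Let `R ⊆ ℝ₊ × ℝ` be a closed barrier
(`(s,x) ∈ R` and `s < t` imply `(t,x) ∈ R`).  For a continuous path `ω` with `ω 0 = 0`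
and `x < x'`, if the space-time paths `t ↦ (t, x + ω t)` and `t ↦ (t, x' + ω t)` both hit
`R` (at their first hitting times `τ, τ'`), then `x + ω τ ≤ x' + ω τ'`. -/
theorem barrier_hitting_monotone
    (R : Set (ℝ × ℝ)) (hRclosed : IsClosed R) (hRsub : R ⊆ {p | 0 ≤ p.1})
    (hbarrier : ∀ s x t, (s, x) ∈ R → s < t → (t, x) ∈ R)
    (ω : ℝ → ℝ) (hω : Continuous ω) (hω0 : ω 0 = 0)
    (x x' : ℝ) (hxx : x < x')
    (hne : {t : ℝ | 0 ≤ t ∧ (t, x + ω t) ∈ R}.Nonempty)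
    (hne' : {t : ℝ | 0 ≤ t ∧ (t, x' + ω t) ∈ R}.Nonempty) :
    x + ω (sInf {t : ℝ | 0 ≤ t ∧ (t, x + ω t) ∈ R}) ≤
      x' + ω (sInf {t : ℝ | 0 ≤ t ∧ (t, x' + ω t) ∈ R}) := by
  have hclosed : ∀ y : ℝ, IsClosed {t : ℝ | 0 ≤ t ∧ (t, y + ω t) ∈ R} := by
    intro y
    have heq : {t : ℝ | 0 ≤ t ∧ (t, y + ω t) ∈ R} =
        Set.Ici 0 ∩ (fun t => (t, y + ω t)) ⁻¹' R := by
      ext t; simp [Set.mem_setOf_eq]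
    rw [heq]
    exact isClosed_Ici.inter
      (hRclosed.preimage (continuous_id.prodMk (continuous_const.add hω)))
  have hbddS : BddBelow {t : ℝ | 0 ≤ t ∧ (t, x + ω t) ∈ R} := ⟨0, fun t ht => ht.1⟩
  have hbddS' : BddBelow {t : ℝ | 0 ≤ t ∧ (t, x' + ω t) ∈ R} := ⟨0, fun t ht => ht.1⟩
  set τ := sInf {t : ℝ | 0 ≤ t ∧ (t, x + ω t) ∈ R} with hτ
  set τ' := sInf {t : ℝ | 0 ≤ t ∧ (t, x' + ω t) ∈ R} with hτ'
  have hmem : 0 ≤ τ ∧ (τ, x + ω τ) ∈ R := (hclosed x).csInf_mem hne hbddS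
  have hmem' : 0 ≤ τ' ∧ (τ', x' + ω τ') ∈ R := (hclosed x').csInf_mem hne' hbddS'
  by_contra hcon
  push_neg at hcon
  rcases le_total τ' τ with hle | hle
  · have hiv := intermediate_value_Icc hle (show
      ContinuousOn (fun t => x + ω t) (Set.Icc τ' τ) from (continuous_const.add hω).continuousOn)
    obtain ⟨s, hsmem, hseq⟩ := hiv ⟨by linarith, hcon.le⟩
    simp only at hseq
    have hsτ' : τ' < s := by
      rcases eq_or_lt_of_le hsmem.1 with heq | hlt
      · exfalso; rw [← heq] at hseq; linarith
      · exact hlt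
    have hR : (s, x' + ω τ') ∈ R := hbarrier τ' (x' + ω τ') s hmem'.2 hsτ'
    rw [← hseq] at hR
    have hsS : s ∈ {t : ℝ | 0 ≤ t ∧ (t, x + ω t) ∈ R} :=
      ⟨le_trans hmem'.1 hsmem.1, hR⟩
    have hτs : τ ≤ s := csInf_le hbddS hsS
    have hs : s = τ := le_antisymm hsmem.2 hτs
    rw [hs] at hseq; linarith
  · have hiv := intermediate_value_Icc' hle (show
      ContinuousOn (fun t => x' + ω t) (Set.Icc τ τ') from (continuous_const.add hω).continuousOn)
    obtain ⟨s, hsmem, hseq⟩ := hiv ⟨hcon.le, by linarith⟩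
    simp only at hseq
    have hτs : τ < s := by
      rcases eq_or_lt_of_le hsmem.1 with heq | hlt
      · exfalso; rw [← heq] at hseq; linarith
      · exact hlt
    have hR : (s, x + ω τ) ∈ R := hbarrier τ (x + ω τ) s hmem.2 hτs
    rw [← hseq] at hR
    have hsS : s ∈ {t : ℝ | 0 ≤ t ∧ (t, x' + ω t) ∈ R} :=
      ⟨le_trans hmem.1 hsmem.1, hR⟩
    have hτ's : τ' ≤ s := csInf_le hbddS' hsS
    have hs : s = τ' := le_antisymm hsmem.2 hτ's
    rw [hs] at hseq; linarith
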